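/- Let (X_k, F_k)_{k=0}^n be a real-valued martingale such that |X_k − X_{k−1}| ≤ d almost surely for some constant d > 0 and every k ∈ {1,...,n}. Then for every α ≥ 0, setting δ = α/d, P(|X_n − X_0| ≥ αn) ≤ 2 exp(−n f(δ)), where f(δ) = ln(2)·[1 − h₂((1−δ)/2)] for 0 ≤ δ ≤ 1 and f(δ) = +∞ for δ > 1 (i.e., the probability is zero when δ > 1). This bound improves the Azuma–Hoeffding bound 2 exp(−δ²n/2), since f(δ) > δ²/2 for every δ > 0. -/

import Mathlib

open MeasureTheory ProbabilityTheory

/-- The binary entropy function to base 2: `h₂(x) = -x log₂ x - (1-x) log₂ (1-x)`. -/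
noncomputable def binaryEntropy2 (x : ℝ) : ℝ :=
  -(x * Real.logb 2 x) - (1 - x) * Real.logb 2 (1 - x)

/-- The exponent `f(δ) = ln 2 · [1 - h₂((1-δ)/2)]` (the value of the extended exponent on
`0 ≤ δ ≤ 1`; for `δ > 1` the exponent is `+∞`, i.e. the probability vanishes). -/
noncomputable def azumaExponent (δ : ℝ) : ℝ :=
  Real.log 2 * (1 - binaryEntropy2 ((1 - δ) / 2))

lemma azumaExponent_eq {δ : ℝ} (h0 : -1 < δ) (h1 : δ < 1) :
    azumaExponent δ = (1 + δ)/2 * Real.log (1 + δ) + (1 - δ)/2 * Real.log (1 - δ) := by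
  have hm : (0:ℝ) < 1 - δ := by linarith
  have hp : (0:ℝ) < 1 + δ := by linarith
  have hl2 : Real.log 2 ≠ 0 := by
    have := Real.log_pos (by norm_num : (1:ℝ) < 2); linarith
  have e1 : (1:ℝ) - (1 - δ)/2 = (1 + δ)/2 := by ring
  rw [azumaExponent, binaryEntropy2, e1, Real.logb, Real.logb,
    Real.log_div (ne_of_gt hm) (by norm_num), Real.log_div (ne_of_gt hp) (by norm_num)]
  field_simp
  ring

lemma azumaExponent_one : azumaExponent 1 = Real.log 2 := by
  simp [azumaExponent, binaryEntropy2]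

lemma convex_exp_bound {d : ℝ} (hd : 0 < d) (l y : ℝ) (hy : |y| ≤ d) :
    Real.exp (l * y) ≤ (Real.exp (l*d) + Real.exp (-(l*d)))/2
      + (y/d) * ((Real.exp (l*d) - Real.exp (-(l*d)))/2) := by
  obtain ⟨hy1, hy2⟩ := abs_le.mp hy
  set t : ℝ := (d + y)/(2*d) with ht
  have ht0 : 0 ≤ t := div_nonneg (by linarith) (by positivity)
  have ht1 : 0 ≤ 1 - t := by
    rw [ht]; rw [sub_nonneg, div_le_one (by positivity)]; linarith
  have key := convexOn_exp.2 (Set.mem_univ (l*d)) (Set.mem_univ (-(l*d))) ht0 ht1 (by ring)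
  simp only [smul_eq_mul] at key
  have harg : t * (l*d) + (1 - t) * (-(l*d)) = l * y := by
    have hdd : d * d⁻¹ = 1 := mul_inv_cancel₀ hd.ne'
    field_simp
    linear_combination (y*l + d*l) * hdd
  rw [harg] at key
  have : t * Real.exp (l*d) + (1-t) * Real.exp (-(l*d))
      = (Real.exp (l*d) + Real.exp (-(l*d)))/2
      + (y/d) * ((Real.exp (l*d) - Real.exp (-(l*d)))/2) := by
    have hdd : d * d⁻¹ = 1 := mul_inv_cancel₀ hd.ne'
    field_simp
    linear_combination (y*Real.exp (l*d) - y*Real.exp (-(l*d)) + d*Real.exp (l*d) - d*Real.exp (-(l*d))) * hdd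
  linarith

lemma exp_neg_n_log_two (n : ℕ) :
    Real.exp (-(n:ℝ) * Real.log 2) = ((1:ℝ)/2)^n := by
  rw [show (-(n:ℝ) * Real.log 2) = (n:ℝ) * (-Real.log 2) by ring, Real.exp_nat_mul,
    Real.exp_neg, Real.exp_log (by norm_num : (0:ℝ) < 2)]
  norm_num

lemma key_real (n : ℕ) {δ : ℝ} (hδ0 : 0 ≤ δ) (hδ1 : δ ≤ 1) (p : ENNReal)
    (hp : ∀ b : ℝ, 0 ≤ b →
      p ≤ ENNReal.ofReal (Real.exp (-(b * δ * n)) * ((Real.exp b + Real.exp (-b))/2)^n)) :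
    p ≤ ENNReal.ofReal (Real.exp (-(n:ℝ) * azumaExponent δ)) := by
  rcases eq_or_lt_of_le hδ1 with rfl | hδlt
  · -- δ = 1 : take b → ∞
    rw [azumaExponent_one]
    have heq : ∀ b : ℝ, Real.exp (-(b * 1 * n)) * ((Real.exp b + Real.exp (-b))/2)^n
        = ((1 + Real.exp (-(2*b)))/2)^n := by
      intro b
      rw [show (-(b*1*(n:ℝ))) = (n:ℝ)*(-b) by ring, Real.exp_nat_mul, ← mul_pow]
      congr 1
      have h5 : Real.exp (-b) * ((Real.exp b + Real.exp (-b))/2)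
          = (Real.exp (-b + b) + Real.exp (-b + -b))/2 := by
        rw [Real.exp_add, Real.exp_add]; ring
      rw [h5, show -b + b = (0:ℝ) by ring, Real.exp_zero, show -b + -b = -(2*b) by ring]
    have h1 : Filter.Tendsto (fun b : ℝ => Real.exp (-(2*b))) Filter.atTop (nhds 0) := by
      apply Real.tendsto_exp_atBot.comp
      exact Filter.tendsto_neg_atBot_iff.mpr
        (Filter.tendsto_id.const_mul_atTop (by norm_num : (0:ℝ) < 2))
    have h2 : Filter.Tendsto (fun b : ℝ => ((1 + Real.exp (-(2*b)))/2)^n)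
        Filter.atTop (nhds (((1:ℝ)/2)^n)) := by
      have hcont : Continuous (fun t : ℝ => ((1 + t)/2)^n) :=
        ((continuous_const.add continuous_id).div_const 2).pow n
      have h3 := (hcont.tendsto (0:ℝ)).comp h1
      simpa [Function.comp_def] using h3
    have hlim : Filter.Tendsto
        (fun b : ℝ => ENNReal.ofReal (Real.exp (-(b * 1 * n)) * ((Real.exp b + Real.exp (-b))/2)^n))
        Filter.atTop (nhds (ENNReal.ofReal (Real.exp (-(n:ℝ) * Real.log 2)))) := by
      rw [exp_neg_n_log_two]
      apply ENNReal.continuous_ofReal.continuousAt.tendsto.comp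
      simp_rw [heq]
      exact h2
    exact ge_of_tendsto hlim (Filter.eventually_atTop.mpr ⟨0, fun b hb => hp b hb⟩)
  · -- δ < 1
    set u := Real.sqrt (1 + δ) with hu
    set v := Real.sqrt (1 - δ) with hv
    have hu0 : 0 < u := Real.sqrt_pos.mpr (by linarith)
    have hv0 : 0 < v := Real.sqrt_pos.mpr (by linarith)
    have hu2 : u^2 = 1 + δ := Real.sq_sqrt (by linarith)
    have hv2 : v^2 = 1 - δ := Real.sq_sqrt (by linarith)
    set b := Real.log (u/v) with hb
    have hb0 : 0 ≤ b := Real.log_nonneg ((one_le_div hv0).mpr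
      (Real.sqrt_le_sqrt (by linarith)))
    refine (hp b hb0).trans (le_of_eq ?_)
    congr 1
    have he1 : Real.exp b = u/v := Real.exp_log (by positivity)
    have he2 : Real.exp (-b) = v/u := by
      rw [Real.exp_neg, he1]; rw [inv_div]
    have hc : (Real.exp b + Real.exp (-b))/2 = Real.exp (-(Real.log u + Real.log v)) := by
      rw [he1, he2, Real.exp_neg, Real.exp_add, Real.exp_log hu0, Real.exp_log hv0]
      have hs : u^2 + v^2 = 2 := by rw [hu2, hv2]; ring
      field_simp
      linear_combination hs
    rw [hc, ← Real.exp_nat_mul, ← Real.exp_add]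
    congr 1
    have hlu : Real.log u = Real.log (1 + δ) / 2 := Real.log_sqrt (by linarith)
    have hlv : Real.log v = Real.log (1 - δ) / 2 := Real.log_sqrt (by linarith)
    have hbe : b = Real.log (1+δ)/2 - Real.log (1-δ)/2 := by
      rw [hb, Real.log_div hu0.ne' hv0.ne', hlu, hlv]
    rw [azumaExponent_eq (by linarith) hδlt, hbe, hlu, hlv]
    ring

lemma two_mul_lt_log_div {x : ℝ} (hx0 : 0 < x) (hx1 : x < 1) :
    2*x < Real.log (1 + x) - Real.log (1 - x) := by
  set F : ℝ → ℝ := fun t => Real.log (1 + t) - Real.log (1 - t) - 2*t with hF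
  have key : StrictMonoOn F (Set.Icc 0 x) := by
    apply strictMonoOn_of_deriv_pos (convex_Icc 0 x)
    · apply ContinuousOn.sub (ContinuousOn.sub ?_ ?_) (continuous_const.mul continuous_id).continuousOn
      · exact (Real.continuousOn_log.comp (continuous_const.add continuous_id).continuousOn
          (fun t ht => by simp only [Set.mem_Icc] at ht; simp; intro h; nlinarith [ht.1]))
      · exact (Real.continuousOn_log.comp (continuous_const.sub continuous_id).continuousOn
          (fun t ht => by simp only [Set.mem_Icc] at ht; simp; intro h; nlinarith [ht.2]))
    · intro t ht
      rw [interior_Icc, Set.mem_Ioo] at ht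
      have h1 : (0:ℝ) < 1 + t := by linarith
      have h2 : (0:ℝ) < 1 - t := by linarith
      have hd1 : HasDerivAt (fun s : ℝ => Real.log (1 + s)) (1/(1+t)) t := by
        have := (Real.hasDerivAt_log h1.ne').comp t ((hasDerivAt_id t).const_add 1)
        simpa [Function.comp_def] using this
      have hd2 : HasDerivAt (fun s : ℝ => Real.log (1 - s)) (-(1/(1-t))) t := by
        have := (Real.hasDerivAt_log h2.ne').comp t ((hasDerivAt_id t).const_sub 1)
        simpa [div_eq_mul_inv, Function.comp_def] using this
      have hd : HasDerivAt F (1/(1+t) - (-(1/(1-t))) - 2) t := by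
        have h4 : HasDerivAt (fun s : ℝ => 2*s) 2 t := by
          simpa using (hasDerivAt_id t).const_mul 2
        exact (hd1.sub hd2).sub h4
      rw [hd.deriv]
      have : 1/(1+t) + 1/(1-t) - 2 = 2*t^2/((1+t)*(1-t)) := by field_simp; ring
      have h3 : (0:ℝ) < 2*t^2/((1+t)*(1-t)) := by
        apply div_pos (by nlinarith) (by nlinarith)
      linarith [this ▸ h3]
  have h0 : F 0 < F x := key (Set.left_mem_Icc.mpr (le_of_lt hx0))
    (Set.right_mem_Icc.mpr (le_of_lt hx0)) hx0
  simp only [hF] at h0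
  simp at h0
  linarith

lemma part3 {δ : ℝ} (h0 : 0 < δ) (h1 : δ ≤ 1) : δ^2/2 < azumaExponent δ := by
  rcases eq_or_lt_of_le h1 with rfl | hlt
  · rw [azumaExponent_one]
    have := Real.log_two_gt_d9
    norm_num at this ⊢
    linarith
  · rw [azumaExponent_eq (by linarith) hlt]
    set G : ℝ → ℝ := fun t => (1 + t)/2 * Real.log (1 + t) + (1 - t)/2 * Real.log (1 - t) - t^2/2
      with hG
    have key : StrictMonoOn G (Set.Icc 0 δ) := by
      apply strictMonoOn_of_deriv_pos (convex_Icc 0 δ)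
      · apply ContinuousOn.sub (ContinuousOn.add ?_ ?_)
          ((continuous_pow 2).continuousOn.div_const 2)
        · exact ContinuousOn.mul ((continuous_const.add continuous_id).continuousOn.div_const 2)
            (Real.continuousOn_log.comp (continuous_const.add continuous_id).continuousOn
              (fun t ht => by simp only [Set.mem_Icc] at ht; simp; intro h; nlinarith [ht.1]))
        · exact ContinuousOn.mul ((continuous_const.sub continuous_id).continuousOn.div_const 2)
            (Real.continuousOn_log.comp (continuous_const.sub continuous_id).continuousOn
              (fun t ht => by simp only [Set.mem_Icc] at ht; simp; intro h; nlinarith [ht.2, hlt]))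
      · intro t ht
        rw [interior_Icc, Set.mem_Ioo] at ht
        have h1t : (0:ℝ) < 1 + t := by linarith
        have h2t : (0:ℝ) < 1 - t := by nlinarith
        have hd1 : HasDerivAt (fun s : ℝ => Real.log (1 + s)) (1/(1+t)) t := by
          have := (Real.hasDerivAt_log h1t.ne').comp t ((hasDerivAt_id t).const_add 1)
          simpa [Function.comp_def] using this
        have hd2 : HasDerivAt (fun s : ℝ => Real.log (1 - s)) (-(1/(1-t))) t := by
          have := (Real.hasDerivAt_log h2t.ne').comp t ((hasDerivAt_id t).const_sub 1)
          simpa [div_eq_mul_inv, Function.comp_def] using this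
        have hda : HasDerivAt (fun s : ℝ => (1 + s)/2) (1/2) t := by
          simpa using (((hasDerivAt_id t).const_add 1).div_const 2)
        have hdb : HasDerivAt (fun s : ℝ => (1 - s)/2) (-(1/2)) t := by
          simpa [neg_div] using (((hasDerivAt_id t).const_sub 1).div_const 2)
        have hdc : HasDerivAt (fun s : ℝ => s^2/2) t t := by
          simpa using ((hasDerivAt_pow 2 t).div_const 2)
        have hd : HasDerivAt G
            ((1/2 * Real.log (1+t) + (1+t)/2 * (1/(1+t)))
              + (-(1/2) * Real.log (1-t) + (1-t)/2 * (-(1/(1-t)))) - t) t :=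
          ((hda.mul hd1).add (hdb.mul hd2)).sub hdc
        rw [hd.deriv]
        have e1 : (1+t)/2 * (1/(1+t)) = 1/2 := by
          field_simp
        have e2 : (1-t)/2 * (-(1/(1-t))) = -(1/2) := by field_simp
        rw [e1, e2]
        have := two_mul_lt_log_div ht.1 (lt_of_lt_of_le ht.2 h1)
        linarith
    have h2 : G 0 < G δ := key (Set.left_mem_Icc.mpr h0.le) (Set.right_mem_Icc.mpr h0.le) h0
    simp only [hG] at h2
    norm_num at h2
    linarith

section Mart

variable {Ω : Type*} {m0 : MeasurableSpace Ω} {μ : Measure Ω}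
  [IsProbabilityMeasure μ] {ℱ : Filtration ℕ m0} {X : ℕ → Ω → ℝ}

lemma integrable_of_abs_le {f : Ω → ℝ} (hm : AEStronglyMeasurable f μ) {C : ℝ}
    (h : ∀ᵐ ω ∂μ, |f ω| ≤ C) : Integrable f μ :=
  Integrable.mono' (integrable_const C) hm (by simpa [Real.norm_eq_abs] using h)

lemma bdd_diff {n : ℕ} {d : ℝ}
    (hjump : ∀ k ∈ Finset.Icc 1 n, ∀ᵐ ω ∂μ, |X k ω - X (k-1) ω| ≤ d) :
    ∀ k, k ≤ n → ∀ᵐ ω ∂μ, |X k ω - X 0 ω| ≤ k * d := by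
  intro k
  induction k with
  | zero => intro _; filter_upwards with ω; simp
  | succ m ih =>
      intro hm1
      have h1 := ih (le_trans (Nat.le_succ m) hm1)
      have h2 := hjump (m+1) (Finset.mem_Icc.mpr ⟨Nat.succ_le_succ (Nat.zero_le m), hm1⟩)
      filter_upwards [h1, h2] with ω hω1 hω2
      have : m + 1 - 1 = m := rfl
      rw [this] at hω2
      have := abs_sub_le (X (m+1) ω) (X m ω) (X 0 ω)
      push_cast
      nlinarith [abs_nonneg (X (m+1) ω - X m ω)]

lemma mgf_le (hX : Martingale X ℱ μ) {n : ℕ} {d : ℝ} (hd : 0 < d)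
    (hjump : ∀ k ∈ Finset.Icc 1 n, ∀ᵐ ω ∂μ, |X k ω - X (k-1) ω| ≤ d) (l : ℝ) :
    ∀ k, k ≤ n → ∫ ω, Real.exp (l * (X k ω - X 0 ω)) ∂μ
      ≤ ((Real.exp (l*d) + Real.exp (-(l*d)))/2)^k := by
  set C : ℝ := (Real.exp (l*d) + Real.exp (-(l*d)))/2 with hC
  set S : ℝ := (Real.exp (l*d) - Real.exp (-(l*d)))/2 with hS
  have hC0 : 0 < C := by positivity
  intro k
  induction k with
  | zero =>
      intro _
      simp only [sub_self, mul_zero, Real.exp_zero, pow_zero]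
      simp [measure_univ]
  | succ m ih =>
      intro hm1
      have hmn : m ≤ n := le_trans (Nat.le_succ m) hm1
      have IH := ih hmn
      -- measurability facts
      have hXm : StronglyMeasurable[ℱ m] (fun ω => X m ω - X 0 ω) :=
        (hX.stronglyAdapted m).sub ((hX.stronglyAdapted 0).mono (ℱ.mono (Nat.zero_le m)))
      have hZm : StronglyMeasurable[ℱ m] (fun ω => Real.exp (l * (X m ω - X 0 ω))) :=
        Real.continuous_exp.comp_stronglyMeasurable (hXm.const_mul l)
      have hZ : AEStronglyMeasurable (fun ω => Real.exp (l * (X m ω - X 0 ω))) μ :=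
        (hZm.mono (ℱ.le m)).aestronglyMeasurable
      have hY : AEStronglyMeasurable (fun ω => X (m+1) ω - X m ω) μ :=
        (((hX.stronglyMeasurable (m+1)).mono (ℱ.le (m+1))).sub
          ((hX.stronglyMeasurable m).mono (ℱ.le m))).aestronglyMeasurable
      -- bounds
      have hbZ : ∀ᵐ ω ∂μ, |Real.exp (l * (X m ω - X 0 ω))| ≤ Real.exp (|l| * (m * d)) := by
        filter_upwards [bdd_diff hjump m hmn] with ω hω
        rw [abs_of_pos (Real.exp_pos _)]
        apply Real.exp_le_exp.mpr
        calc l * (X m ω - X 0 ω) ≤ |l * (X m ω - X 0 ω)| := le_abs_self _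
          _ = |l| * |X m ω - X 0 ω| := abs_mul _ _
          _ ≤ |l| * (m * d) := by
              exact mul_le_mul_of_nonneg_left hω (abs_nonneg l)
      have hbY : ∀ᵐ ω ∂μ, |X (m+1) ω - X m ω| ≤ d := by
        have h2 := hjump (m+1) (Finset.mem_Icc.mpr ⟨Nat.succ_le_succ (Nat.zero_le m), hm1⟩)
        simpa using h2
      set B : ℝ := Real.exp (|l| * (m * d)) with hB
      have hB0 : 0 < B := Real.exp_pos _
      -- integrabilities
      have hiZ : Integrable (fun ω => Real.exp (l * (X m ω - X 0 ω))) μ :=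
        integrable_of_abs_le hZ hbZ
      have hiY : Integrable (fun ω => X (m+1) ω - X m ω) μ :=
        (hX.integrable (m+1)).sub (hX.integrable m)
      have hiZY : Integrable (fun ω => Real.exp (l * (X m ω - X 0 ω)) * (X (m+1) ω - X m ω)) μ := by
        apply integrable_of_abs_le (hZ.mul hY) (C := B * d)
        filter_upwards [hbZ, hbY] with ω h1 h2
        simp only [Pi.mul_apply]
        rw [abs_mul]
        exact mul_le_mul h1 h2 (abs_nonneg _) hB0.le
      have hiZE : Integrable (fun ω => Real.exp (l * (X (m+1) ω - X 0 ω))) μ := by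
        apply integrable_of_abs_le
          ((Real.continuous_exp.comp_stronglyMeasurable
            ((((hX.stronglyMeasurable (m+1)).mono (ℱ.le (m+1))).sub
            ((hX.stronglyMeasurable 0).mono (ℱ.le 0))).const_mul l)).aestronglyMeasurable)
          (C := Real.exp (|l| * ((m+1) * d)))
        filter_upwards [bdd_diff hjump (m+1) hm1] with ω hω
        rw [abs_of_pos (Real.exp_pos _)]
        apply Real.exp_le_exp.mpr
        calc l * (X (m+1) ω - X 0 ω) ≤ |l| * |X (m+1) ω - X 0 ω| := by
              rw [← abs_mul]; exact le_abs_self _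
          _ ≤ |l| * ((m+1) * d) := by
              apply mul_le_mul_of_nonneg_left _ (abs_nonneg l)
              push_cast at hω ⊢; linarith
      -- conditional expectation: ∫ Z * Y = 0
      have hcondY : μ[fun ω => X (m+1) ω - X m ω | ℱ m] =ᵐ[μ] 0 := by
        have h1 : μ[fun ω => X (m+1) ω - X m ω | ℱ m]
            =ᵐ[μ] μ[X (m+1) | ℱ m] - μ[X m | ℱ m] :=
          condExp_sub (hX.integrable (m+1)) (hX.integrable m) _
        have h2 := hX.condExp_ae_eq (Nat.le_succ m)
        have h3 := hX.condExp_ae_eq (le_refl m)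
        filter_upwards [h1, h2, h3] with ω e1 e2 e3
        simp only [Pi.sub_apply, Pi.zero_apply] at *
        rw [e1, e2, e3, sub_self]
      have hZY0 : ∫ ω, Real.exp (l * (X m ω - X 0 ω)) * (X (m+1) ω - X m ω) ∂μ = 0 := by
        have hpull : μ[(fun ω => Real.exp (l * (X m ω - X 0 ω))) *
              (fun ω => X (m+1) ω - X m ω) | ℱ m]
            =ᵐ[μ] (fun ω => Real.exp (l * (X m ω - X 0 ω))) *
              μ[fun ω => X (m+1) ω - X m ω | ℱ m] :=
          condExp_mul_of_stronglyMeasurable_left hZm hiZY hiY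
        have := integral_condExp (ℱ.le m) (μ := μ)
          (f := (fun ω => Real.exp (l * (X m ω - X 0 ω))) * (fun ω => X (m+1) ω - X m ω))
        have heq2 : μ[(fun ω => Real.exp (l * (X m ω - X 0 ω))) *
              (fun ω => X (m+1) ω - X m ω) | ℱ m] =ᵐ[μ] (0 : Ω → ℝ) := by
          filter_upwards [hpull, hcondY] with ω h1 h2
          simp only [Pi.mul_apply, Pi.zero_apply] at h1 h2 ⊢
          rw [h1, h2, mul_zero]
        rw [show (fun ω => Real.exp (l * (X m ω - X 0 ω)) * (X (m+1) ω - X m ω))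
          = (fun ω => Real.exp (l * (X m ω - X 0 ω))) * (fun ω => X (m+1) ω - X m ω) from rfl,
          ← this, integral_congr_ae heq2]
        simp
      -- pointwise bound
      have hpt : ∀ᵐ ω ∂μ, Real.exp (l * (X (m+1) ω - X 0 ω))
          ≤ C * Real.exp (l * (X m ω - X 0 ω))
            + (S/d) * (Real.exp (l * (X m ω - X 0 ω)) * (X (m+1) ω - X m ω)) := by
        filter_upwards [hbY] with ω hω
        have key := convex_exp_bound hd l (X (m+1) ω - X m ω) hω
        have hsplit : l * (X (m+1) ω - X 0 ω)
            = l * (X m ω - X 0 ω) + l * (X (m+1) ω - X m ω) := by ring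
        rw [hsplit, Real.exp_add]
        have hZpos : (0:ℝ) < Real.exp (l * (X m ω - X 0 ω)) := Real.exp_pos _
        calc Real.exp (l * (X m ω - X 0 ω)) * Real.exp (l * (X (m+1) ω - X m ω))
            ≤ Real.exp (l * (X m ω - X 0 ω)) * (C + ((X (m+1) ω - X m ω)/d) * S) := by
              exact mul_le_mul_of_nonneg_left key hZpos.le
          _ = C * Real.exp (l * (X m ω - X 0 ω))
              + (S/d) * (Real.exp (l * (X m ω - X 0 ω)) * (X (m+1) ω - X m ω)) := by
              field_simp
      -- put together
      calc ∫ ω, Real.exp (l * (X (m+1) ω - X 0 ω)) ∂μ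
          ≤ ∫ ω, (C * Real.exp (l * (X m ω - X 0 ω))
            + (S/d) * (Real.exp (l * (X m ω - X 0 ω)) * (X (m+1) ω - X m ω))) ∂μ := by
            apply integral_mono_ae hiZE ((hiZ.const_mul C).add (hiZY.const_mul (S/d))) hpt
        _ = C * ∫ ω, Real.exp (l * (X m ω - X 0 ω)) ∂μ
            + (S/d) * ∫ ω, Real.exp (l * (X m ω - X 0 ω)) * (X (m+1) ω - X m ω) ∂μ := by
            rw [integral_add (hiZ.const_mul C) (hiZY.const_mul (S/d)),
              integral_const_mul, integral_const_mul]
        _ = C * ∫ ω, Real.exp (l * (X m ω - X 0 ω)) ∂μ := by rw [hZY0]; ring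
        _ ≤ C * C^m := mul_le_mul_of_nonneg_left IH hC0.le
        _ = C^(m+1) := by ring


lemma one_sided (hX : Martingale X ℱ μ) {n : ℕ} {d : ℝ} (hd : 0 < d)
    (hjump : ∀ k ∈ Finset.Icc 1 n, ∀ᵐ ω ∂μ, |X k ω - X (k-1) ω| ≤ d)
    {α : ℝ} {l : ℝ} (hl : 0 ≤ l) :
    μ {ω | α * n ≤ X n ω - X 0 ω} ≤
      ENNReal.ofReal (Real.exp (-(l * α * n))
        * ((Real.exp (l*d) + Real.exp (-(l*d)))/2)^n) := by
  set C : ℝ := (Real.exp (l*d) + Real.exp (-(l*d)))/2 with hC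
  have hε : (0:ℝ) < Real.exp (l * (α * n)) := Real.exp_pos _
  have hint : Integrable (fun ω => Real.exp (l * (X n ω - X 0 ω))) μ := by
    apply integrable_of_abs_le
      ((Real.continuous_exp.comp_stronglyMeasurable
        ((((hX.stronglyMeasurable n).mono (ℱ.le n)).sub
        ((hX.stronglyMeasurable 0).mono (ℱ.le 0))).const_mul l)).aestronglyMeasurable)
      (C := Real.exp (|l| * (n * d)))
    filter_upwards [bdd_diff hjump n le_rfl] with ω hω
    rw [abs_of_pos (Real.exp_pos _)]
    apply Real.exp_le_exp.mpr
    calc l * (X n ω - X 0 ω) ≤ |l| * |X n ω - X 0 ω| := by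
          rw [← abs_mul]; exact le_abs_self _
      _ ≤ |l| * ((n:ℝ) * d) := mul_le_mul_of_nonneg_left hω (abs_nonneg l)
  have hmono : {ω | α * n ≤ X n ω - X 0 ω}
      ⊆ {ω | Real.exp (l * (α * n)) ≤ Real.exp (l * (X n ω - X 0 ω))} := by
    intro ω h
    exact Real.exp_le_exp.mpr (mul_le_mul_of_nonneg_left h hl)
  have markov := mul_meas_ge_le_integral_of_nonneg
    (ae_of_all μ fun ω => (Real.exp_pos (l * (X n ω - X 0 ω))).le) hint (Real.exp (l * (α * n)))
  have hmgf := mgf_le hX hd hjump l n le_rfl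
  have htR : (μ {ω | α * n ≤ X n ω - X 0 ω}).toReal
      ≤ Real.exp (-(l * α * n)) * C^n := by
    have h1 : (μ {ω | α * n ≤ X n ω - X 0 ω}).toReal
        ≤ (μ {ω | Real.exp (l * (α * n)) ≤ Real.exp (l * (X n ω - X 0 ω))}).toReal :=
      ENNReal.toReal_mono (measure_ne_top μ _) (measure_mono hmono)
    have h2 : Real.exp (l * (α * n)) *
        (μ {ω | Real.exp (l * (α * n)) ≤ Real.exp (l * (X n ω - X 0 ω))}).toReal ≤ C^n :=
      le_trans markov hmgf
    have h3 : (μ {ω | Real.exp (l * (α * n)) ≤ Real.exp (l * (X n ω - X 0 ω))}).toReal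
        ≤ C^n / Real.exp (l * (α * n)) := by
      rw [le_div_iff₀ hε]; linarith
    have h4 : C^n / Real.exp (l * (α * n)) = Real.exp (-(l * α * n)) * C^n := by
      rw [Real.exp_neg, div_eq_mul_inv]
      rw [show l * α * (n:ℝ) = l * (α * n) by ring]
      ring
    linarith
  calc μ {ω | α * n ≤ X n ω - X 0 ω}
      = ENNReal.ofReal ((μ {ω | α * n ≤ X n ω - X 0 ω}).toReal) :=
        (ENNReal.ofReal_toReal (measure_ne_top μ _)).symm
    _ ≤ ENNReal.ofReal (Real.exp (-(l * α * n)) * C^n) := ENNReal.ofReal_le_ofReal htR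

end Mart

/-- Tightened Azuma–Hoeffding inequality for martingales with jumps bounded by `d`:
with `δ = α/d`, `P(|X_n - X_0| ≥ αn) ≤ 2 exp(-n f(δ))` where
`f(δ) = ln 2 [1 - h₂((1-δ)/2)]` for `0 ≤ δ ≤ 1`, and the probability is zero for `δ > 1`.
Moreover the bound improves on Azuma–Hoeffding since `f(δ) > δ²/2` for every `δ > 0`
(on the range `δ ≤ 1` where `f` is finite; for `δ > 1` one has `f(δ) = +∞`). -/
theorem tightened_azuma_hoeffding {Ω : Type*} {m0 : MeasurableSpace Ω} {μ : Measure Ω}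
    [IsProbabilityMeasure μ] {ℱ : Filtration ℕ m0} {X : ℕ → Ω → ℝ}
    (hX : Martingale X ℱ μ) {n : ℕ} (hn : 0 < n) {d : ℝ} (hd : 0 < d)
    (hjump : ∀ k ∈ Finset.Icc 1 n, ∀ᵐ ω ∂μ, |X k ω - X (k-1) ω| ≤ d)
    {α : ℝ} (hα : 0 ≤ α) :
    (α/d ≤ 1 → μ {ω | α * n ≤ |X n ω - X 0 ω|} ≤
        ENNReal.ofReal (2 * Real.exp (-(n : ℝ) * azumaExponent (α/d)))) ∧
    (1 < α/d → μ {ω | α * n ≤ |X n ω - X 0 ω|} = 0) ∧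
    (∀ δ : ℝ, 0 < δ → δ ≤ 1 → δ^2/2 < azumaExponent δ) := by
  refine ⟨?_, ?_, fun δ h0 h1 => part3 h0 h1⟩
  · intro hδ1
    have hδ0 : 0 ≤ α/d := div_nonneg hα hd.le
    have hjumpneg : ∀ k ∈ Finset.Icc 1 n, ∀ᵐ ω ∂μ, |(-X) k ω - (-X) (k-1) ω| ≤ d := by
      intro k hk
      filter_upwards [hjump k hk] with ω hω
      simp only [Pi.neg_apply]
      rw [show -X k ω - -X (k-1) ω = -(X k ω - X (k-1) ω) by ring, abs_neg]
      exact hω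
    have hA : μ {ω | α * n ≤ X n ω - X 0 ω}
        ≤ ENNReal.ofReal (Real.exp (-(n:ℝ) * azumaExponent (α/d))) := by
      apply key_real n hδ0 hδ1
      intro b hb
      have h := one_sided hX hd hjump (α := α) (l := b/d) (div_nonneg hb hd.le)
      rw [div_mul_cancel₀ b hd.ne'] at h
      refine h.trans (le_of_eq ?_)
      congr 2
      ring
    have hB : μ {ω | α * n ≤ X 0 ω - X n ω}
        ≤ ENNReal.ofReal (Real.exp (-(n:ℝ) * azumaExponent (α/d))) := by
      have hBeq : {ω | α * (n:ℝ) ≤ X 0 ω - X n ω}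
          = {ω | α * (n:ℝ) ≤ (-X) n ω - (-X) 0 ω} := by
        ext ω
        simp only [Set.mem_setOf_eq, Pi.neg_apply]
        constructor <;> intro h <;> linarith
      rw [hBeq]
      apply key_real n hδ0 hδ1
      intro b hb
      have h := one_sided hX.neg hd hjumpneg (α := α) (l := b/d) (div_nonneg hb hd.le)
      rw [div_mul_cancel₀ b hd.ne'] at h
      refine h.trans (le_of_eq ?_)
      congr 2
      ring
    have hsub : {ω | α * (n:ℝ) ≤ |X n ω - X 0 ω|}
        ⊆ {ω | α * (n:ℝ) ≤ X n ω - X 0 ω} ∪ {ω | α * (n:ℝ) ≤ X 0 ω - X n ω} := by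
      intro ω h
      simp only [Set.mem_setOf_eq] at h
      rcases le_abs.mp h with h' | h'
      · exact Or.inl h'
      · exact Or.inr (by simp only [Set.mem_setOf_eq]; linarith)
    calc μ {ω | α * n ≤ |X n ω - X 0 ω|}
        ≤ μ ({ω | α * (n:ℝ) ≤ X n ω - X 0 ω} ∪ {ω | α * (n:ℝ) ≤ X 0 ω - X n ω}) :=
          measure_mono hsub
      _ ≤ μ {ω | α * (n:ℝ) ≤ X n ω - X 0 ω} + μ {ω | α * (n:ℝ) ≤ X 0 ω - X n ω} :=
          measure_union_le _ _
      _ ≤ ENNReal.ofReal (Real.exp (-(n:ℝ) * azumaExponent (α/d)))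
          + ENNReal.ofReal (Real.exp (-(n:ℝ) * azumaExponent (α/d))) := add_le_add hA hB
      _ = ENNReal.ofReal (2 * Real.exp (-(n:ℝ) * azumaExponent (α/d))) := by
          rw [← ENNReal.ofReal_add (Real.exp_nonneg _) (Real.exp_nonneg _)]
          congr 1
          ring
  · intro h
    have hda : d < α := (one_lt_div hd).mp h
    have hnot : ∀ᵐ ω ∂μ, ¬ (α * (n:ℝ) ≤ |X n ω - X 0 ω|) := by
      filter_upwards [bdd_diff hjump n le_rfl] with ω hω
      intro hcon
      have hn' : (0:ℝ) < n := by exact_mod_cast hn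
      nlinarith
    have h0 := ae_iff.mp hnot
    exact measure_mono_null (fun ω hω => not_not_intro hω) h0
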